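/- Let A be a unital ring and c \in A a central element such that A is c-adically complete, i.e. the canonical ring homomorphism A \to \varprojlim_n A/c^n A is bijective. If the quotient ring A/cA is left noetherian, then A is left noetherian. -/

import Mathlib

section

variable {A : Type*} [Ring A]

/-- For a central element `c` of a ring `A`, the congruence relation on `A` identifying
`a` and `b` when `a - b ∈ cⁿA`; its quotient ring is `A/cⁿA`. -/
def adicCon (c : A) (hc : ∀ a : A, c * a = a * c) (n : ℕ) : RingCon A where
  r a b := ∃ x : A, a - b = c ^ n * x
  iseqv := by
    refine ⟨fun a => ⟨0, by simp⟩, ?_, ?_⟩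
    · rintro a b ⟨x, hx⟩
      refine ⟨-x, ?_⟩
      rw [mul_neg, ← hx]; abel
    · rintro a b d ⟨x, hx⟩ ⟨y, hy⟩
      refine ⟨x + y, ?_⟩
      rw [mul_add, ← hx, ← hy]; abel
  add' := by
    rintro a b a' b' ⟨x, hx⟩ ⟨y, hy⟩
    refine ⟨x + y, ?_⟩
    rw [mul_add, ← hx, ← hy]; abel
  mul' := by
    rintro a b a' b' ⟨x, hx⟩ ⟨y, hy⟩
    have h1 : Commute (c ^ n) a := Commute.pow_left (hc a) n
    refine ⟨a * y + x * b', ?_⟩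
    calc a * a' - b * b' = a * (a' - b') + (a - b) * b' := by noncomm_ring
      _ = a * (c ^ n * y) + c ^ n * x * b' := by rw [hx, hy]
      _ = c ^ n * (a * y) + c ^ n * (x * b') := by
          rw [← mul_assoc, ← h1.eq, mul_assoc, mul_assoc]
      _ = c ^ n * (a * y + x * b') := by rw [mul_add]

/-- The transition map `A/c^(n+1)A → A/cⁿA` of the inverse system. -/
def adicTransition (c : A) (hc : ∀ a : A, c * a = a * c) (n : ℕ) :
    (adicCon c hc (n + 1)).Quotient → (adicCon c hc n).Quotient :=
  Quotient.map' id (by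
    rintro a b ⟨x, hx⟩
    exact ⟨c * x, by show a - b = _; rw [hx, pow_succ, mul_assoc]⟩)

/-- The inverse limit `lim_n A/cⁿA`, realized as the set of sequences compatible with
the transition maps. -/
def AdicLim (c : A) (hc : ∀ a : A, c * a = a * c) : Type _ :=
  { f : ∀ n : ℕ, (adicCon c hc n).Quotient //
    ∀ n : ℕ, adicTransition c hc n (f (n + 1)) = f n }

/-- The canonical map `A → lim_n A/cⁿA` (the underlying function of the canonical ring
homomorphism). -/
def toAdicLim (c : A) (hc : ∀ a : A, c * a = a * c) (a : A) : AdicLim c hc :=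
  ⟨fun n => (adicCon c hc n).mk' a, fun n => rfl⟩


section AuxLemmas

variable {A : Type*} [Ring A]

private lemma adic_eq_zero_of_forall (c : A) (hc : ∀ a : A, c * a = a * c)
    (hcomplete : Function.Bijective (toAdicLim c hc))
    (z : A) (h : ∀ n : ℕ, ∃ x : A, z = c ^ n * x) : z = 0 := by
  apply hcomplete.1
  apply Subtype.ext
  funext n
  show (adicCon c hc n).mk' z = (adicCon c hc n).mk' 0
  obtain ⟨x, hx⟩ := h n
  exact Quotient.sound' ⟨x, by simpa using hx⟩

private lemma adic_exists_limit (c : A) (hc : ∀ a : A, c * a = a * c)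
    (hcomplete : Function.Bijective (toAdicLim c hc))
    (S : ℕ → A) (h : ∀ n : ℕ, ∃ x : A, S (n + 1) - S n = c ^ n * x) :
    ∃ r : A, ∀ n : ℕ, ∃ x : A, r - S n = c ^ n * x := by
  obtain ⟨r, hr⟩ := hcomplete.2 ⟨fun n => (adicCon c hc n).mk' (S n), fun n => by
    show adicTransition c hc n ((adicCon c hc (n + 1)).mk' (S (n + 1)))
        = (adicCon c hc n).mk' (S n)
    have h1 : adicTransition c hc n ((adicCon c hc (n + 1)).mk' (S (n + 1)))
        = (adicCon c hc n).mk' (S (n + 1)) := rfl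
    rw [h1]
    exact Quotient.sound' (h n)⟩
  refine ⟨r, fun n => ?_⟩
  have h2 : (adicCon c hc n).mk' r = (adicCon c hc n).mk' (S n) :=
    congrFun (congrArg Subtype.val hr) n
  exact Quotient.exact' h2

end AuxLemmas

/-- let `A` be a unital ring and `c ∈ A` a central element such that `A` is
`c`-adically complete (the canonical ring homomorphism `A → lim_n A/cⁿA` is bijective).
If `A/cA` is left noetherian, then `A` is left noetherian. -/
theorem isNoetherianRing_of_adicComplete_of_quotient_noetherian
    (c : A) (hc : ∀ a : A, c * a = a * c)
    (hcomplete : Function.Bijective (toAdicLim c hc))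
    (hnoeth : IsNoetherianRing (adicCon c hc 1).Quotient) :
    IsNoetherianRing A := by
  classical
  have hpow : ∀ (n : ℕ) (a : A), c ^ n * a = a * c ^ n :=
    fun n a => (Commute.pow_left (hc a) n).eq
  rw [isNoetherianRing_iff_ideal_fg]
  intro I
  set Q := (adicCon c hc 1).Quotient with hQ
  haveI hNoe : IsNoetherian Q Q := hnoeth
  set π : A →+* Q := (adicCon c hc 1).mk' with hπdef
  have hπsurj : Function.Surjective π := fun q => Quotient.inductionOn' q fun a => ⟨a, rfl⟩
  have hmono : ∀ {m n : ℕ}, m ≤ n → ∀ {a : A}, c ^ m * a ∈ I → c ^ n * a ∈ I := by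
    intro m n hmn a ha
    have h1 : c ^ n * a = c ^ (n - m) * (c ^ m * a) := by
      rw [← mul_assoc, ← pow_add, Nat.sub_add_cancel hmn]
    rw [h1]; exact I.mul_mem_left _ ha
  let Lid : ℕ → Ideal A := fun n =>
    { carrier := {a | c ^ n * a ∈ I}
      add_mem' := fun {a b} ha hb => by
        simp only [Set.mem_setOf_eq, mul_add] at *
        exact I.add_mem ha hb
      zero_mem' := by simp only [Set.mem_setOf_eq, mul_zero]; exact I.zero_mem
      smul_mem' := fun r a ha => by
        simp only [Set.mem_setOf_eq, smul_eq_mul] at *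
        have h1 : c ^ n * (r * a) = r * (c ^ n * a) := by
          rw [← mul_assoc, hpow n r, mul_assoc]
        rw [h1]; exact I.mul_mem_left r ha }
  have hLid : ∀ (n : ℕ) (a : A), a ∈ Lid n ↔ c ^ n * a ∈ I := fun n a => Iff.rfl
  let M : ℕ →o Ideal Q :=
    ⟨fun n => Ideal.map π (Lid n), fun m n hmn =>
      Ideal.map_mono (fun a ha => (hLid n a).mpr (hmono hmn ((hLid m a).mp ha)))⟩
  obtain ⟨N, hN⟩ := monotone_stabilizes_iff_noetherian.mpr hNoe M
  -- choose finite generating sets, lifted to A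
  have hgen : ∀ n : ℕ, ∃ s : Finset A,
      (∀ a ∈ s, c ^ n * a ∈ I) ∧
        Ideal.map π (Lid n) ≤ Ideal.map π (Ideal.span (↑s : Set A)) := by
    intro n
    obtain ⟨G, hG⟩ := IsNoetherian.noetherian (M n)
    have hlift : ∀ q ∈ G, ∃ a : A, a ∈ Lid n ∧ π a = q := by
      intro q hq
      have h1 : q ∈ Ideal.map π (Lid n) := by
        rw [show Ideal.map π (Lid n) = M n from rfl, ← hG]
        exact Ideal.subset_span hq
      obtain ⟨a, ha, rfl⟩ := (Ideal.mem_map_iff_of_surjective π hπsurj).mp h1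
      exact ⟨a, ha, rfl⟩
    choose f hf1 hf2 using hlift
    refine ⟨G.attach.image fun q => f q.1 q.2, ?_, ?_⟩
    · intro a ha
      simp only [Finset.mem_image, Finset.mem_attach, true_and] at ha
      obtain ⟨q, rfl⟩ := ha
      exact (hLid n _).mp (hf1 q.1 q.2)
    · rw [Ideal.map_span]
      intro q hq
      rw [show Ideal.map π (Lid n) = M n from rfl, ← hG] at hq
      refine Ideal.span_mono ?_ hq
      intro y hy
      refine ⟨f y hy, ?_, hf2 y hy⟩
      simp only [Finset.coe_image, Set.mem_image, Finset.mem_coe, Finset.mem_attach]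
      exact ⟨⟨y, hy⟩, trivial, rfl⟩
  choose s hs1 hs2 using hgen
  set T : Finset ((_ : ℕ) × A) := (Finset.range (N + 1)).sigma fun m => s m with hT
  set g : ((_ : ℕ) × A) → A := fun p => c ^ p.1 * p.2 with hg
  have hgI : ∀ p ∈ T, g p ∈ I := by
    intro p hp
    rw [hT, Finset.mem_sigma, Finset.mem_range] at hp
    exact hs1 p.1 p.2 hp.2
  -- the approximation step
  have step : ∀ (n : ℕ) (b : A), c ^ n * b ∈ I →
      ∃ (b' : A) (t : A → A),
        c ^ n * b = (∑ p ∈ T, (if p.1 = min n N then t p.2 * c ^ (n - N) else 0) * g p)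
            + c ^ (n + 1) * b' ∧ c ^ (n + 1) * b' ∈ I := by
    intro n b hb
    set m := min n N with hm
    have hmN : m ≤ N := min_le_right _ _
    have hmn : m ≤ n := min_le_left _ _
    have hbm : π b ∈ Ideal.map π (Lid m) := by
      have h1 : π b ∈ Ideal.map π (Lid n) := Ideal.mem_map_of_mem π ((hLid n b).mpr hb)
      rcases le_total n N with h | h
      · have : m = n := min_eq_left h
        rw [this]; exact h1
      · have : m = N := min_eq_right h
        rw [this, show Ideal.map π (Lid N) = M N from rfl, hN n h]
        exact h1
    have hb2 : π b ∈ Ideal.map π (Ideal.span (↑(s m) : Set A)) := hs2 m hbm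
    obtain ⟨y, hy, hyb⟩ := (Ideal.mem_map_iff_of_surjective π hπsurj).mp hb2
    obtain ⟨z, hz⟩ : ∃ z : A, y - b = c ^ 1 * z := Quotient.exact' hyb
    obtain ⟨t, -, ht⟩ := Submodule.mem_span_finset.mp hy
    refine ⟨-z, t, ?_, ?_⟩
    · have hcny : c ^ n * y = ∑ a ∈ s m, (t a * c ^ (n - N)) * (c ^ m * a) := by
        rw [← ht, Finset.mul_sum]
        refine Finset.sum_congr rfl fun a _ => ?_
        have h1 : c ^ n * (t a • a) = t a * (c ^ n * a) := by
          rw [smul_eq_mul, ← mul_assoc, hpow n (t a), mul_assoc]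
        have h2 : c ^ n * a = c ^ (n - N) * (c ^ m * a) := by
          rw [← mul_assoc, ← pow_add]
          congr 1
          rw [hm]
          rcases Nat.le_total n N with h | h
          · rw [Nat.min_eq_left h, Nat.sub_eq_zero_of_le h, Nat.zero_add]
          · rw [Nat.min_eq_right h, Nat.sub_add_cancel h]
        rw [h1, h2, ← mul_assoc]
      have hsum : (∑ p ∈ T, (if p.1 = m then t p.2 * c ^ (n - N) else 0) * g p)
          = ∑ a ∈ s m, (t a * c ^ (n - N)) * (c ^ m * a) := by
        rw [hT, Finset.sum_sigma]
        rw [Finset.sum_eq_single m]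
        · refine Finset.sum_congr rfl fun a _ => ?_
          simp [hg]
        · intro m' _ hne
          exact Finset.sum_eq_zero fun a _ => by simp [hne]
        · intro hmem
          exact absurd (Finset.mem_range.mpr (Nat.lt_succ_of_le hmN)) hmem
      have hb' : c ^ (n + 1) * (-z) = c ^ n * b - c ^ n * y := by
        have h3 : c ^ (n + 1) * (-z) = c ^ n * (c ^ 1 * (-z)) := by
          rw [← mul_assoc, ← pow_add]
        rw [h3, show c ^ 1 * (-z) = -(c ^ 1 * z) from mul_neg _ _, ← hz]
        rw [show -(y - b) = b - y by abel, mul_sub]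
      rw [hsum, ← hcny, hb']
      abel
    · have hyI : c ^ n * y ∈ I := by
        have hcny : c ^ n * y = ∑ a ∈ s m, (t a * c ^ (n - N)) * (c ^ m * a) := by
          rw [← ht, Finset.mul_sum]
          refine Finset.sum_congr rfl fun a _ => ?_
          have h1 : c ^ n * (t a • a) = t a * (c ^ n * a) := by
            rw [smul_eq_mul, ← mul_assoc, hpow n (t a), mul_assoc]
          have h2 : c ^ n * a = c ^ (n - N) * (c ^ m * a) := by
            rw [← mul_assoc, ← pow_add]
            congr 1
            rw [hm]
            rcases Nat.le_total n N with h | h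
            · rw [Nat.min_eq_left h, Nat.sub_eq_zero_of_le h, Nat.zero_add]
            · rw [Nat.min_eq_right h, Nat.sub_add_cancel h]
          rw [h1, h2, ← mul_assoc]
        rw [hcny]
        exact Ideal.sum_mem I fun a ha => I.mul_mem_left _ (hs1 m a ha)
      have hb' : c ^ (n + 1) * (-z) = c ^ n * b - c ^ n * y := by
        have h3 : c ^ (n + 1) * (-z) = c ^ n * (c ^ 1 * (-z)) := by
          rw [← mul_assoc, ← pow_add]
        rw [h3, show c ^ 1 * (-z) = -(c ^ 1 * z) from mul_neg _ _, ← hz]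
        rw [show -(y - b) = b - y by abel, mul_sub]
      rw [hb']
      exact I.sub_mem hb hyI
  choose b' t hstep hstep' using step
  -- prove I = span of the finite set
  refine ⟨T.image g, le_antisymm ?_ ?_⟩
  · rw [Ideal.span_le]
    intro x hx
    rw [Finset.coe_image, Set.mem_image] at hx
    obtain ⟨p, hp, rfl⟩ := hx
    exact hgI p (Finset.mem_coe.mp hp)
  · intro i hi
    -- successive approximation
    let B : (n : ℕ) → {x : A // c ^ n * x ∈ I} := fun n =>
      Nat.rec ⟨i, by simpa using hi⟩
        (fun k prev => ⟨b' k prev.1 prev.2, hstep' k prev.1 prev.2⟩) n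
    have hB0 : (B 0).1 = i := rfl
    have hBsucc : ∀ k : ℕ, (B (k + 1)).1 = b' k (B k).1 (B k).2 := fun k => rfl
    let V : ℕ → ((_ : ℕ) × A) → A := fun k p =>
      if p.1 = min k N then t k (B k).1 (B k).2 p.2 * c ^ (k - N) else 0
    have hV : ∀ (k : ℕ) (p : (_ : ℕ) × A),
        V k p = if p.1 = min k N then t k (B k).1 (B k).2 p.2 * c ^ (k - N) else 0 :=
      fun _ _ => rfl
    have hinv : ∀ n : ℕ,
        i = (∑ p ∈ T, (∑ j ∈ Finset.range n, V j p) * g p) + c ^ n * (B n).1 := by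
      intro n
      induction n with
      | zero =>
        rw [hB0]
        simp
      | succ k ih =>
        have hstepk := hstep k (B k).1 (B k).2
        rw [← hBsucc k] at hstepk
        calc i = (∑ p ∈ T, (∑ j ∈ Finset.range k, V j p) * g p) + c ^ k * (B k).1 := ih
          _ = (∑ p ∈ T, (∑ j ∈ Finset.range k, V j p) * g p)
              + ((∑ p ∈ T, V k p * g p) + c ^ (k + 1) * (B (k + 1)).1) := by
              rw [hstepk]
          _ = (∑ p ∈ T, (∑ j ∈ Finset.range (k + 1), V j p) * g p)
              + c ^ (k + 1) * (B (k + 1)).1 := by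
              rw [← add_assoc, ← Finset.sum_add_distrib]
              congr 1
              refine Finset.sum_congr rfl fun p _ => ?_
              rw [Finset.sum_range_succ, add_mul]
    -- limits of the coefficient partial sums
    have hlim : ∀ p : (_ : ℕ) × A, ∃ r : A, ∀ n : ℕ, ∃ x : A,
        r - (∑ j ∈ Finset.range (n + N), V j p) = c ^ n * x := by
      intro p
      apply adic_exists_limit c hc hcomplete
      intro n
      have h1 : (∑ j ∈ Finset.range (n + 1 + N), V j p)
          - (∑ j ∈ Finset.range (n + N), V j p) = V (n + N) p := by
        rw [show n + 1 + N = (n + N) + 1 by omega, Finset.sum_range_succ]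
        abel
      rw [h1, hV]
      by_cases h : p.1 = min (n + N) N
      · rw [if_pos h]
        exact ⟨t (n + N) (B (n + N)).1 (B (n + N)).2 p.2, by
          rw [show n + N - N = n by omega, hpow]⟩
      · rw [if_neg h]
        exact ⟨0, by rw [mul_zero]⟩
    choose r hr using hlim
    have hzero : i - ∑ p ∈ T, r p * g p = 0 := by
      apply adic_eq_zero_of_forall c hc hcomplete
      intro n
      choose x hxx using fun p => hr p n
      refine ⟨c ^ N * (B (n + N)).1 - ∑ p ∈ T, x p * g p, ?_⟩
      rw [hinv (n + N)]
      rw [mul_sub, ← mul_assoc, ← pow_add, Finset.mul_sum]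
      have h2 : ∀ p ∈ T, c ^ n * (x p * g p)
          = r p * g p - (∑ j ∈ Finset.range (n + N), V j p) * g p := by
        intro p _
        rw [← mul_assoc, ← hxx p, sub_mul]
      rw [Finset.sum_congr rfl h2, Finset.sum_sub_distrib]
      abel
    have hfin : i = ∑ p ∈ T, r p * g p := by rwa [sub_eq_zero] at hzero
    rw [hfin]
    refine Submodule.sum_mem _ fun p hp => ?_
    exact Ideal.mul_mem_left _ _ (Ideal.subset_span
      (by rw [Finset.coe_image]; exact Set.mem_image_of_mem g (Finset.mem_coe.mpr hp)))


end
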